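/- Let G be a Polish group. Then G has a neighborhood basis at the identity consisting of open normal subgroups if and only if G has a neighborhood basis at the identity consisting of open subgroups and admits a compatible two-sided invariant metric. -/

import Mathlib

open Filter Topology

/-- a Polish group has a neighborhood basis at the identity of open normal
subgroups iff it has a neighborhood basis at the identity of open subgroups and admits a
compatible two-sided invariant metric. -/
theorem stmt_6 (G : Type*) [Group G] [TopologicalSpace G] [IsTopologicalGroup G]
    [PolishSpace G] :
    (𝓝 (1 : G)).HasBasis (fun H : Subgroup G => IsOpen (H : Set G) ∧ H.Normal)
        (fun H => (H : Set G)) ↔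
      ((𝓝 (1 : G)).HasBasis (fun H : Subgroup G => IsOpen (H : Set G))
          (fun H => (H : Set G)) ∧
        ∃ d : G → G → ℝ,
          (∀ x y, d x y = 0 ↔ x = y) ∧ (∀ x y, d x y = d y x) ∧
          (∀ x y z, d x z ≤ d x y + d y z) ∧
          (∀ g x y, d (g * x) (g * y) = d x y) ∧
          (∀ g x y, d (x * g) (y * g) = d x y) ∧
          ∀ x : G, (𝓝 x).HasBasis (fun ε : ℝ => 0 < ε) fun ε => {y | d x y < ε}) := by
  classical
  constructor
  · intro hB
    have hopen : (𝓝 (1 : G)).HasBasis (fun H : Subgroup G => IsOpen (H : Set G))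
        (fun H => (H : Set G)) := by
      refine hB.to_hasBasis (fun H hH => ⟨H, hH.1, subset_rfl⟩) (fun H hH => ?_)
      obtain ⟨H', hH', hsub⟩ := hB.mem_iff.mp (hH.mem_nhds H.one_mem)
      exact ⟨H', hH', hsub⟩
    refine ⟨hopen, ?_⟩
    obtain ⟨H, hHP, hanti⟩ := hB.exists_antitone_subbasis
    -- the metric
    set f : G → ℕ → ℝ := fun z n => if z ∈ H n then 0 else (1 / 2) ^ n with hf
    have hf0 : ∀ z n, 0 ≤ f z n := by
      intro z n; simp only [hf]; split <;> positivity
    have hfle : ∀ z n, f z n ≤ (1 / 2) ^ n := by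
      intro z n; simp only [hf]; split
      · positivity
      · exact le_rfl
    have hfs : ∀ z, Summable (f z) :=
      fun z => Summable.of_nonneg_of_le (hf0 z) (hfle z) summable_geometric_two
    set d : G → G → ℝ := fun x y => ∑' n, f (x⁻¹ * y) n with hd
    have hdnn : ∀ x y, 0 ≤ d x y := fun x y => tsum_nonneg (hf0 _)
    -- membership in all H n implies = 1
    have hall : ∀ z : G, (∀ n, z ∈ H n) → z = 1 := by
      intro z hz
      by_contra hne
      have : ({z}ᶜ : Set G) ∈ 𝓝 (1 : G) :=
        (isOpen_compl_singleton).mem_nhds (by simpa using (Ne.symm hne))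
      obtain ⟨n, -, hsub⟩ := hanti.toHasBasis.mem_iff.mp this
      exact hsub (hz n) rfl
    -- d 1 z small when z ∈ H n
    have hball_sub : ∀ n : ℕ, ∀ z : G, z ∈ H n → d 1 z ≤ (1 / 2) ^ n := by
      intro n z hz
      have hz' : ∀ k ≤ n, (1 : G)⁻¹ * z ∈ H k := by
        intro k hk
        simpa using hanti.antitone hk hz
      have h1 : d 1 z = ∑' k, f (1⁻¹ * z) (k + (n + 1)) := by
        show (∑' k, f (1⁻¹ * z) k) = _
        rw [← Summable.sum_add_tsum_nat_add (n + 1) (hfs _)]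
        have : ∑ i ∈ Finset.range (n + 1), f (1⁻¹ * z) i = 0 := by
          apply Finset.sum_eq_zero
          intro i hi
          simp only [hf, if_pos (hz' i (Nat.lt_succ_iff.mp (Finset.mem_range.mp hi)))]
        rw [this, zero_add]
      rw [h1]
      calc ∑' k, f (1⁻¹ * z) (k + (n + 1)) ≤ ∑' k : ℕ, (1 / 2 : ℝ) ^ (k + (n + 1)) := by
            refine Summable.tsum_le_tsum (fun k => hfle _ _) ?_ ?_
            · exact ((hfs _).comp_injective (add_left_injective (n + 1)))
            · exact (summable_geometric_two.comp_injective (add_left_injective (n + 1)))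
        _ = (1 / 2) ^ n := by
            have : ∀ k : ℕ, (1 / 2 : ℝ) ^ (k + (n + 1)) = (1 / 2) ^ (n + 1) * (1 / 2) ^ k := by
              intro k; rw [pow_add, mul_comm]
            simp_rw [this]
            rw [tsum_mul_left, tsum_geometric_two]
            rw [pow_succ]
            ring
    -- z ∉ H n implies d 1 z ≥ (1/2)^n
    have hball_sup : ∀ n : ℕ, ∀ z : G, d 1 z < (1 / 2) ^ n → z ∈ H n := by
      intro n z hz
      by_contra hzn
      have : (1 / 2 : ℝ) ^ n ≤ d 1 z := by
        have heq : f (1⁻¹ * z) n = (1 / 2) ^ n := by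
          simp only [hf]
          rw [if_neg (by simpa using hzn)]
        have hle : f (1⁻¹ * z) n ≤ ∑' k, f (1⁻¹ * z) k :=
          Summable.le_tsum (hfs _) n (fun j _ => hf0 _ _)
        rw [heq] at hle
        exact hle
      linarith
    -- basis of balls at 1
    have hb1 : (𝓝 (1 : G)).HasBasis (fun ε : ℝ => 0 < ε) fun ε => {y | d 1 y < ε} := by
      refine ⟨fun t => ⟨fun ht => ?_, ?_⟩⟩
      · obtain ⟨n, -, hsub⟩ := hanti.toHasBasis.mem_iff.mp ht
        refine ⟨(1 / 2) ^ n, by positivity, fun z hz => hsub (hball_sup n z hz)⟩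
      · rintro ⟨ε, hε, hsub⟩
        obtain ⟨n, hn⟩ := exists_pow_lt_of_lt_one hε (by norm_num : (1 / 2 : ℝ) < 1)
        refine mem_of_superset (hanti.toHasBasis.mem_of_mem (by trivial) : (↑(H n) : Set G) ∈ _)
          (fun z hz => hsub ?_)
        exact lt_of_le_of_lt (hball_sub n z hz) hn
    have hleft : ∀ g x y : G, d (g * x) (g * y) = d x y := by
      intro g x y
      show (∑' n, f ((g * x)⁻¹ * (g * y)) n) = ∑' n, f (x⁻¹ * y) n
      rw [show (g * x)⁻¹ * (g * y) = x⁻¹ * y from by group]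
    have hd1 : ∀ x y : G, d x y = d 1 (x⁻¹ * y) := by
      intro x y
      have := hleft x⁻¹ x y
      simpa using this.symm
    refine ⟨d, ?_, ?_, ?_, hleft, ?_, ?_⟩
    · -- d x y = 0 ↔ x = y
      intro x y
      constructor
      · intro h
        have hm : ∀ n, x⁻¹ * y ∈ H n := by
          intro n
          apply hball_sup n
          rw [← hd1, h]
          positivity
        have := hall _ hm
        rw [inv_mul_eq_one] at this
        exact this
      · rintro rfl
        simp only [hd, inv_mul_cancel, hf]
        simp [Subgroup.one_mem]
    · -- symmetry
      intro x y
      show (∑' n, f (x⁻¹ * y) n) = ∑' n, f (y⁻¹ * x) n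
      apply tsum_congr
      intro n
      simp only [hf]
      congr 1
      rw [eq_iff_iff]
      constructor
      · intro h; simpa [mul_inv_rev] using (H n).inv_mem h
      · intro h; simpa [mul_inv_rev] using (H n).inv_mem h
    · -- triangle
      intro x y z
      show (∑' n, f (x⁻¹ * z) n) ≤ (∑' n, f (x⁻¹ * y) n) + ∑' n, f (y⁻¹ * z) n
      rw [← Summable.tsum_add (hfs _) (hfs _)]
      refine Summable.tsum_le_tsum (fun n => ?_) (hfs _) ((hfs _).add (hfs _))
      by_cases hxz : x⁻¹ * z ∈ H n
      · simp only [hf, if_pos hxz]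
        positivity
      · have : x⁻¹ * y ∉ H n ∨ y⁻¹ * z ∉ H n := by
          by_contra hc
          push_neg at hc
          exact hxz (by simpa [mul_assoc] using (H n).mul_mem hc.1 hc.2)
        simp only [hf, if_neg hxz]
        rcases this with h | h
        · rw [if_neg h]
          have := hf0 (y⁻¹ * z) n
          simp only [hf] at this ⊢
          linarith
        · rw [if_neg h]
          have := hf0 (x⁻¹ * y) n
          simp only [hf] at this ⊢
          linarith
    · -- right invariance
      intro g x y
      show (∑' n, f ((x * g)⁻¹ * (y * g)) n) = ∑' n, f (x⁻¹ * y) n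
      apply tsum_congr
      intro n
      simp only [hf]
      congr 1
      rw [eq_iff_iff]
      have key : ∀ a : G, a ∈ H n ↔ g⁻¹ * a * g ∈ H n := by
        intro a
        constructor
        · intro h
          simpa using (hHP n).2.conj_mem a h g⁻¹
        · intro h
          have := (hHP n).2.conj_mem _ h g
          simpa [mul_assoc] using this
      rw [show (x * g)⁻¹ * (y * g) = g⁻¹ * (x⁻¹ * y) * g from by group]
      exact (key _).symm
    · -- basis of balls everywhere
      intro x
      refine ⟨fun t => ?_⟩
      rw [← map_mul_left_nhds_one x, mem_map, hb1.mem_iff]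
      refine exists_congr fun ε => and_congr_right fun _ => ?_
      constructor
      · intro hsub y hy
        have : x * (x⁻¹ * y) ∈ t := hsub (by rw [Set.mem_setOf_eq, ← hd1]; exact hy)
        simpa using this
      · intro hsub z hz
        refine hsub ?_
        rw [Set.mem_setOf_eq, hd1]
        simpa using hz
  · rintro ⟨hsub, d, h0, hsymm, htri, hleft, hright, hball⟩
    have hconj : ∀ g x : G, d 1 (g * x * g⁻¹) = d 1 x := by
      intro g x
      have h1 := hleft g⁻¹ 1 (g * x * g⁻¹)
      have h2 := hright g (g⁻¹ * 1) (g⁻¹ * (g * x * g⁻¹))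
      rw [h1] at h2
      rw [← h2]
      congr 1 <;> group
    refine ⟨fun t => ⟨fun ht => ?_, ?_⟩⟩
    · -- find open normal subgroup inside t
      obtain ⟨A, hAo, hAt⟩ := hsub.mem_iff.mp ht
      obtain ⟨ε, hε, hballA⟩ := (hball 1).mem_iff.mp (hAo.mem_nhds A.one_mem)
      obtain ⟨K, hKo, hKball⟩ := hsub.mem_iff.mp ((hball 1).mem_of_mem hε)
      refine ⟨Subgroup.normalClosure (K : Set G), ⟨?_, Subgroup.normalClosure_normal⟩, ?_⟩
      · exact Subgroup.isOpen_mono Subgroup.le_normalClosure hKo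
      · refine subset_trans ?_ hAt
        have : Subgroup.normalClosure (K : Set G) ≤ A := by
          rw [Subgroup.normalClosure]
          rw [Subgroup.closure_le]
          intro x hx
          obtain ⟨a, ha, g, hg⟩ := Group.mem_conjugatesOfSet_iff.mp hx
          apply hballA
          have hx' : x = ↑g * a * (↑g : G)⁻¹ := by
            have h := hg.eq
            rw [eq_mul_inv_iff_mul_eq]
            exact h.symm
          rw [Set.mem_setOf_eq, hx']
          calc d 1 (↑g * a * (↑g : G)⁻¹) = d 1 a := hconj (↑g) a
            _ < ε := hKball ha
        exact this
    · rintro ⟨N, ⟨hNo, -⟩, hNt⟩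
      exact mem_of_superset (hNo.mem_nhds N.one_mem) hNt
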